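/- Let q be a power of 2, r_2 = 2(q-1), and Δ(a,b) = S_1(a)S_1(b) - S_1(a+b). Then for 1 ≤ b ≤ r_2: Δ(2,b) = S_1(2) if b = q-1, and Δ(2,b) = 0 otherwise. -/

import Mathlib

open Finset
variable {K : Type*} [Field K]

lemma key_split (h2 : (2:K) = 0) {Y c : K} (hY : Y ≠ 0) (hc : c ≠ 0) (hYc : Y + c ≠ 0) :
    Y⁻¹ * (Y + c)⁻¹ = c⁻¹ * Y⁻¹ + c⁻¹ * (Y + c)⁻¹ := by
  field_simp
  linear_combination (-Y) * h2

lemma pfB (h2 : (2:K) = 0) {Y c : K} (hY : Y ≠ 0) (hc : c ≠ 0) (hYc : Y + c ≠ 0) (b : ℕ) :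
    ((Y + c) * Y ^ b)⁻¹ =
      (c⁻¹) ^ b * (Y + c)⁻¹ + ∑ i ∈ range b, (c⁻¹) ^ (i + 1) * (Y⁻¹) ^ (b - i) := by
  induction b with
  | zero => simp
  | succ b ih =>
    have hstep : ((Y + c) * Y ^ (b + 1))⁻¹ = Y⁻¹ * ((Y + c) * Y ^ b)⁻¹ := by
      rw [pow_succ]
      field_simp
    rw [hstep, ih, mul_add, Finset.mul_sum, Finset.sum_range_succ]
    have h1 : Y⁻¹ * ((c⁻¹) ^ b * (Y + c)⁻¹)
        = (c⁻¹) ^ (b+1) * (Y + c)⁻¹ + (c⁻¹) ^ (b + 1) * (Y⁻¹) ^ (b + 1 - b) := by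
      have := key_split h2 hY hc hYc
      simp only [Nat.add_sub_cancel_left, pow_one]
      calc Y⁻¹ * ((c⁻¹) ^ b * (Y + c)⁻¹) = (c⁻¹)^b * (Y⁻¹ * (Y+c)⁻¹) := by ring
        _ = (c⁻¹)^b * (c⁻¹ * Y⁻¹ + c⁻¹ * (Y + c)⁻¹) := by rw [this]
        _ = _ := by ring
    rw [h1]
    have h2' : ∀ i ∈ range b, Y⁻¹ * ((c⁻¹) ^ (i+1) * (Y⁻¹) ^ (b - i))
        = (c⁻¹) ^ (i+1) * (Y⁻¹) ^ (b + 1 - i) := by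
      intro i hi
      simp only [mem_range] at hi
      have : b + 1 - i = (b - i) + 1 := by omega
      rw [this, pow_succ]
      ring
    rw [Finset.sum_congr rfl h2']
    ring

lemma pfA (h2 : (2:K) = 0) {Y c : K} (hY : Y ≠ 0) (hc : c ≠ 0) (hYc : Y + c ≠ 0) (b : ℕ) :
    ((Y + c) ^ 2 * Y ^ b)⁻¹ =
      (if b % 2 = 1 then (c⁻¹) ^ (b + 1) else 0) * (Y + c)⁻¹
      + (c⁻¹) ^ b * ((Y + c)⁻¹) ^ 2
      + ∑ i ∈ range b, (if i % 2 = 0 then (c⁻¹) ^ (i + 2) * (Y⁻¹) ^ (b - i) else 0) := by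
  have e1 := key_split h2 hY hc hYc
  induction b with
  | zero => simp
  | succ b ih =>
    have hstep : ((Y + c) ^ 2 * Y ^ (b + 1))⁻¹ = Y⁻¹ * ((Y + c) ^ 2 * Y ^ b)⁻¹ := by
      rw [pow_succ]
      field_simp
      ring
    rw [hstep, ih, Finset.sum_range_succ, mul_add, mul_add, Finset.mul_sum]
    have h2' : ∀ i ∈ range b, Y⁻¹ * (if i % 2 = 0 then (c⁻¹) ^ (i + 2) * (Y⁻¹) ^ (b - i) else 0)
        = (if i % 2 = 0 then (c⁻¹) ^ (i + 2) * (Y⁻¹) ^ (b + 1 - i) else 0) := by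
      intro i hi
      simp only [mem_range] at hi
      split
      · have : b + 1 - i = (b - i) + 1 := by omega
        rw [this, pow_succ]; ring
      · simp
    rw [Finset.sum_congr rfl h2']
    have hA : Y⁻¹ * ((if b % 2 = 1 then (c⁻¹) ^ (b + 1) else 0) * (Y + c)⁻¹)
          + Y⁻¹ * ((c⁻¹) ^ b * ((Y + c)⁻¹) ^ 2)
        = (if (b+1) % 2 = 1 then (c⁻¹) ^ (b + 2) else 0) * (Y + c)⁻¹
          + (c⁻¹) ^ (b+1) * ((Y + c)⁻¹) ^ 2
          + (if b % 2 = 0 then (c⁻¹) ^ (b + 2) * (Y⁻¹) ^ (b + 1 - b) else 0) := by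
      simp only [Nat.add_sub_cancel_left, pow_one]
      rcases Nat.even_or_odd b with hb | hb
      · have hb0 : b % 2 = 0 := Nat.even_iff.mp hb
        rw [if_neg (by omega), if_pos (by omega : (b+1) % 2 = 1), if_pos hb0]
        calc (Y⁻¹ * (0 * (Y + c)⁻¹)) + Y⁻¹ * ((c⁻¹) ^ b * ((Y + c)⁻¹) ^ 2)
            = (c⁻¹)^b * ((Y⁻¹ * (Y+c)⁻¹) * (Y+c)⁻¹) := by ring
          _ = (c⁻¹)^b * ((c⁻¹ * Y⁻¹ + c⁻¹ * (Y + c)⁻¹) * (Y+c)⁻¹) := by rw [e1]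
          _ = (c⁻¹)^(b+1) * (Y⁻¹ * (Y+c)⁻¹) + (c⁻¹)^(b+1) * ((Y+c)⁻¹)^2 := by ring
          _ = (c⁻¹)^(b+1) * (c⁻¹ * Y⁻¹ + c⁻¹ * (Y + c)⁻¹) + (c⁻¹)^(b+1) * ((Y+c)⁻¹)^2 := by
              rw [e1]
          _ = _ := by ring
      · have hb1 : b % 2 = 1 := Nat.odd_iff.mp hb
        rw [if_pos hb1, if_neg (by omega : ¬ ((b+1) % 2 = 1)), if_neg (by omega : ¬ (b % 2 = 0))]
        calc Y⁻¹ * ((c⁻¹) ^ (b + 1) * (Y + c)⁻¹) + Y⁻¹ * ((c⁻¹) ^ b * ((Y + c)⁻¹) ^ 2)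
            = (c⁻¹) ^ (b+1) * (Y⁻¹ * (Y + c)⁻¹)
              + (c⁻¹) ^ b * ((Y⁻¹ * (Y + c)⁻¹) * (Y+c)⁻¹) := by ring
          _ = (c⁻¹) ^ (b+1) * (c⁻¹ * Y⁻¹ + c⁻¹ * (Y + c)⁻¹)
              + (c⁻¹) ^ b * ((c⁻¹ * Y⁻¹ + c⁻¹ * (Y + c)⁻¹) * (Y+c)⁻¹) := by rw [e1]
          _ = (c⁻¹) ^ (b+2) * Y⁻¹ + (c⁻¹) ^ (b+2) * (Y+c)⁻¹
              + (c⁻¹) ^ (b+1) * (Y⁻¹ * (Y + c)⁻¹) + (c⁻¹)^(b+1) * ((Y+c)⁻¹)^2 := by ring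
          _ = (c⁻¹) ^ (b+2) * Y⁻¹ + (c⁻¹) ^ (b+2) * (Y+c)⁻¹
              + (c⁻¹) ^ (b+1) * (c⁻¹ * Y⁻¹ + c⁻¹ * (Y + c)⁻¹)
              + (c⁻¹)^(b+1) * ((Y+c)⁻¹)^2 := by rw [e1]
          _ = 0 * (Y + c)⁻¹ + (c⁻¹) ^ (b + 1) * ((Y + c)⁻¹) ^ 2 + 0 := by
              linear_combination ((c⁻¹) ^ (b+2) * Y⁻¹ + (c⁻¹) ^ (b+2) * (Y+c)⁻¹) * h2
    linear_combination hA

lemma sum_pow_erase_zero {F : Type} [Field F] [Fintype F] [DecidableEq F] (h2 : (2:F) = 0)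
    (m : ℕ) :
    ∑ c ∈ (Finset.univ.erase (0:F)), c ^ m
      = if (Fintype.card F - 1) ∣ m then (1:F) else 0 := by
  have key : ∑ c ∈ (Finset.univ.erase (0:F)), c ^ m = ∑ x : Fˣ, (x : F) ^ m := by
    apply Finset.sum_nbij' (i := fun c => if h : c = (0:F) then 1 else Units.mk0 c h)
      (j := fun x => (x : F))
    · intro a _; exact mem_univ _
    · intro x _
      exact Finset.mem_erase.mpr ⟨Units.ne_zero x, mem_univ _⟩
    · intro a ha
      rw [dif_neg (Finset.mem_erase.mp ha).1]
      rfl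
    · intro x _
      ext
      rw [dif_neg (Units.ne_zero x)]
      rfl
    · intro a ha
      rw [dif_neg (Finset.mem_erase.mp ha).1]
      rfl
  rw [key, FiniteField.sum_pow_units F m]
  have hneg : (-1 : F) = 1 := by
    rw [neg_eq_iff_add_eq_zero, ← h2]; norm_num
  split <;> simp [hneg]

/-- For `q` a power of 2 and `1 ≤ b ≤ 2(q-1)`:
`Δ(2,b) = S_1(2)` if `b = q-1`, and `Δ(2,b) = 0` otherwise. -/
theorem stmt_12 (s q : ℕ) (hs : 0 < s) (hq : q = 2 ^ s)
    {F : Type} [Field F] [Fintype F] (hF : Fintype.card F = q)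
    (S1 : ℕ → RatFunc F)
    (hS1 : ∀ k, S1 k = ∑ θ : F, ((RatFunc.X + RatFunc.C θ) ^ k)⁻¹)
    (Δ : ℕ → ℕ → RatFunc F)
    (hΔ : ∀ a b, Δ a b = S1 a * S1 b - S1 (a + b))
    (b : ℕ) (hb1 : 1 ≤ b) (hb2 : b ≤ 2 * (q - 1)) :
    Δ 2 b = if b = q - 1 then S1 2 else 0 := by
  classical
  have hq2 : 2 ≤ q := by
    subst hq
    calc 2 = 2 ^ 1 := by norm_num
    _ ≤ 2 ^ s := Nat.pow_le_pow_right (by norm_num) hs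
  have h2F : (2:F) = 0 := by
    have hc := FiniteField.cast_card_eq_zero F
    rw [hF, hq] at hc
    push_cast at hc
    exact pow_eq_zero_iff (by omega : s ≠ 0) |>.mp hc
  have h2K : (2 : RatFunc F) = 0 := by
    rw [show (2:RatFunc F) = RatFunc.C 2 from (map_ofNat RatFunc.C 2).symm, h2F, map_zero]
  have haddF : ∀ x : F, x + x = 0 := fun x => by
    rw [← two_mul, h2F, zero_mul]
  have hXC : ∀ θ : F, (RatFunc.X + RatFunc.C θ) ≠ 0 := by
    intro θ
    rw [← RatFunc.algebraMap_X, ← RatFunc.algebraMap_C, ← map_add]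
    exact RatFunc.algebraMap_ne_zero (Polynomial.X_add_C_ne_zero θ)
  have hs' : ∀ m : ℕ, ∑ c ∈ Finset.univ.erase (0:F), ((RatFunc.C c)⁻¹) ^ m
      = if (q - 1) ∣ m then (1 : RatFunc F) else 0 := by
    intro m
    have h1 : ∀ c ∈ Finset.univ.erase (0:F),
        ((RatFunc.C c)⁻¹) ^ m = RatFunc.C ((c⁻¹)^m) := by
      intro c _; rw [map_pow, map_inv₀]
    rw [Finset.sum_congr rfl h1, ← map_sum]
    have hinv : ∑ c ∈ Finset.univ.erase (0:F), (c⁻¹)^m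
        = ∑ c ∈ Finset.univ.erase (0:F), c^m := by
      apply Finset.sum_nbij' (i := fun c : F => c⁻¹) (j := fun c : F => c⁻¹)
      · intro a ha
        exact Finset.mem_erase.mpr ⟨inv_ne_zero (Finset.mem_erase.mp ha).1, mem_univ _⟩
      · intro a ha
        exact Finset.mem_erase.mpr ⟨inv_ne_zero (Finset.mem_erase.mp ha).1, mem_univ _⟩
      · intro a _; simp
      · intro a _; simp
      · intro a _; simp
    rw [hinv, sum_pow_erase_zero h2F, hF]
    split <;> simp
  have hS1' : ∀ k, S1 k = ∑ θ : F, ((RatFunc.X + RatFunc.C θ)⁻¹) ^ k := by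
    intro k; rw [hS1]; simp only [← inv_pow]
  -- step 1 : off-diagonal expansion
  have step1 : Δ 2 b = ∑ θ : F, ∑ η ∈ Finset.univ.erase θ,
      ((RatFunc.X + RatFunc.C θ)⁻¹) ^ 2 * ((RatFunc.X + RatFunc.C η)⁻¹) ^ b := by
    rw [hΔ, hS1' 2, hS1' b, hS1' (2+b), Finset.sum_mul, ← Finset.sum_sub_distrib]
    apply Finset.sum_congr rfl
    intro θ _
    rw [Finset.mul_sum, ← Finset.add_sum_erase _ _ (Finset.mem_univ θ), pow_add]
    ring
  -- step 2 : reindex inner sum by c = θ + η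
  have step2 : ∀ θ : F, (∑ η ∈ Finset.univ.erase θ,
        ((RatFunc.X + RatFunc.C θ)⁻¹) ^ 2 * ((RatFunc.X + RatFunc.C η)⁻¹) ^ b)
      = ∑ c ∈ Finset.univ.erase 0,
        ((RatFunc.X + RatFunc.C θ)⁻¹) ^ 2 * ((RatFunc.X + RatFunc.C (θ + c))⁻¹) ^ b := by
    intro θ
    apply Finset.sum_nbij' (i := fun η : F => θ + η) (j := fun c : F => θ + c)
    · intro a ha
      refine Finset.mem_erase.mpr ⟨?_, mem_univ _⟩
      intro h
      apply (Finset.mem_erase.mp ha).1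
      have : θ + (θ + a) = θ + 0 := by rw [h]
      rw [← add_assoc, haddF θ, zero_add, add_zero] at this
      exact this
    · intro a ha
      refine Finset.mem_erase.mpr ⟨?_, mem_univ _⟩
      intro h
      apply (Finset.mem_erase.mp ha).1
      have : θ + θ + a = 0 := by rw [add_assoc, h, haddF]
      rwa [haddF θ, zero_add] at this
    · intro a _; rw [← add_assoc, haddF θ, zero_add]
    · intro a _; rw [← add_assoc, haddF θ, zero_add]
    · intro a _; rw [← add_assoc, haddF θ, zero_add]
  -- step 3 : partial fractions per pair
  have step3 : ∀ (θ c : F), c ∈ Finset.univ.erase (0:F) →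
      ((RatFunc.X + RatFunc.C θ)⁻¹) ^ 2 * ((RatFunc.X + RatFunc.C (θ + c))⁻¹) ^ b
      = (if b % 2 = 1 then ((RatFunc.C c)⁻¹) ^ (b + 1) else 0) * (RatFunc.X + RatFunc.C θ)⁻¹
        + ((RatFunc.C c)⁻¹) ^ b * ((RatFunc.X + RatFunc.C θ)⁻¹) ^ 2
        + ∑ i ∈ range b, (if i % 2 = 0 then
            ((RatFunc.C c)⁻¹) ^ (i + 2) * ((RatFunc.X + RatFunc.C (θ + c))⁻¹) ^ (b - i) else 0) := by
    intro θ c hc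
    have hc0 : c ≠ 0 := (Finset.mem_erase.mp hc).1
    have hY : RatFunc.X + RatFunc.C (θ + c) ≠ 0 := hXC _
    have hcc : (RatFunc.C c : RatFunc F) ≠ 0 := by
      simpa using hc0
    have hYc : (RatFunc.X + RatFunc.C (θ + c)) + RatFunc.C c = RatFunc.X + RatFunc.C θ := by
      rw [add_assoc, ← map_add, add_assoc, haddF c, add_zero]
    have hA := pfA h2K hY hcc (by rw [hYc]; exact hXC θ) b
    rw [hYc] at hA
    rw [← hA, inv_pow, inv_pow, ← mul_inv]
  -- coefficient sums
  have hcoef : ∀ (P : Prop) [Decidable P] (m : ℕ),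
      (∑ c ∈ Finset.univ.erase (0:F), (if P then ((RatFunc.C c)⁻¹) ^ m else 0))
      = (if P then (1:RatFunc F) else 0) * (if (q-1) ∣ m then 1 else 0) := by
    intro P _ m
    by_cases hP : P
    · simp only [if_pos hP, one_mul]
      exact hs' m
    · simp [hP]
  -- master sum split
  have master : Δ 2 b =
      (if b % 2 = 1 then (1:RatFunc F) else 0) * (if (q-1) ∣ (b+1) then 1 else 0) * S1 1
      + (if (q-1) ∣ b then (1:RatFunc F) else 0) * S1 2
      + ∑ i ∈ range b, (if i % 2 = 0 then (1:RatFunc F) else 0)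
          * (if (q-1) ∣ (i+2) then 1 else 0) * S1 (b - i) := by
    rw [step1]
    rw [Finset.sum_congr rfl (fun θ _ => step2 θ)]
    rw [Finset.sum_congr rfl (fun θ _ => Finset.sum_congr rfl (fun c hc => step3 θ c hc))]
    have hsplit : ∀ θ : F, (∑ c ∈ Finset.univ.erase (0:F),
        ((if b % 2 = 1 then ((RatFunc.C c)⁻¹) ^ (b + 1) else 0) * (RatFunc.X + RatFunc.C θ)⁻¹
        + ((RatFunc.C c)⁻¹) ^ b * ((RatFunc.X + RatFunc.C θ)⁻¹) ^ 2
        + ∑ i ∈ range b, (if i % 2 = 0 then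
            ((RatFunc.C c)⁻¹) ^ (i + 2) * ((RatFunc.X + RatFunc.C (θ + c))⁻¹) ^ (b - i) else 0)))
        = (if b % 2 = 1 then (1:RatFunc F) else 0) * (if (q-1) ∣ (b+1) then 1 else 0)
            * (RatFunc.X + RatFunc.C θ)⁻¹
          + (if (q-1) ∣ b then (1:RatFunc F) else 0) * ((RatFunc.X + RatFunc.C θ)⁻¹) ^ 2
          + ∑ i ∈ range b, ∑ c ∈ Finset.univ.erase (0:F), (if i % 2 = 0 then
            ((RatFunc.C c)⁻¹) ^ (i + 2) * ((RatFunc.X + RatFunc.C (θ + c))⁻¹) ^ (b - i) else 0) := by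
      intro θ
      rw [Finset.sum_add_distrib, Finset.sum_add_distrib, ← Finset.sum_mul, ← Finset.sum_mul,
        hcoef _ (b+1), hs' b, Finset.sum_comm]
    rw [Finset.sum_congr rfl (fun θ _ => hsplit θ)]
    rw [Finset.sum_add_distrib, Finset.sum_add_distrib]
    congr 1
    · congr 1
      · rw [← Finset.mul_sum, hS1' 1]
        simp only [pow_one]
      · rw [← Finset.mul_sum, hS1' 2]
    · rw [Finset.sum_comm]
      apply Finset.sum_congr rfl
      intro i _
      by_cases hi : i % 2 = 0
      · simp only [hi, if_pos, if_true]
        have hinner : ∀ c ∈ Finset.univ.erase (0:F),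
            (∑ θ : F, ((RatFunc.C c)⁻¹) ^ (i + 2) * ((RatFunc.X + RatFunc.C (θ + c))⁻¹) ^ (b - i))
            = ((RatFunc.C c)⁻¹) ^ (i + 2) * S1 (b - i) := by
          intro c _
          rw [← Finset.mul_sum, hS1' (b-i)]
          congr 1
          exact Equiv.sum_comp (Equiv.addRight c)
            (fun θ => ((RatFunc.X + RatFunc.C θ)⁻¹) ^ (b - i))
        rw [Finset.sum_comm, Finset.sum_congr rfl hinner, ← Finset.sum_mul, hs' (i+2)]
        ring
      · simp [hi]
  rw [master]
  have h2q : 2 ∣ q := by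
    rw [hq]; exact dvd_pow_self 2 (by omega)
  by_cases hqq : q = 2
  · -- q = 2 : b = 1 or b = 2
    subst hqq
    interval_cases b
    · norm_num [Finset.sum_range_succ]
      linear_combination (S1 1) * h2K
    · norm_num [Finset.sum_range_succ]
      linear_combination (S1 2) * h2K
  · have hq4 : 4 ≤ q := by
      have hs2 : 2 ≤ s := by
        rcases Nat.lt_or_ge s 2 with h | h
        · exfalso
          apply hqq
          rw [hq]
          interval_cases s
          norm_num
        · exact h
      calc 4 = 2 ^ 2 := by norm_num
      _ ≤ 2 ^ s := Nat.pow_le_pow_right (by norm_num) hs2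
      _ = q := hq.symm
    have hm : ∀ m : ℕ, 1 ≤ m → m ≤ 2*q - 1 → (q-1) ∣ m → (m = q - 1 ∨ m = 2*q-2) := by
      rintro m hm2 hub ⟨k, hk⟩
      rcases k with _ | _ | _ | k
      · rw [Nat.mul_zero] at hk; omega
      · rw [Nat.mul_one] at hk; omega
      · omega
      · exfalso
        have h3 : (q-1)*3 ≤ (q-1)*(k+3) := Nat.mul_le_mul_left _ (by omega)
        rw [← hk] at h3
        omega
    have hE3 : ∀ i ∈ range b, ((if i % 2 = 0 then (1:RatFunc F) else 0)
          * (if (q-1) ∣ (i+2) then (1:RatFunc F) else 0) * S1 (b - i))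
        = if i = 2*q-4 then S1 (b - i) else 0 := by
      intro i hi
      simp only [mem_range] at hi
      by_cases h1 : i % 2 = 0
      · by_cases h2 : (q-1) ∣ (i+2)
        · have hmm := hm (i+2) (by omega) (by omega) h2
          have hii : i = 2*q-4 := by omega
          rw [if_pos hii, if_pos h1, if_pos h2, one_mul, one_mul]
        · rw [if_neg h2, if_neg (show ¬ (i = 2*q-4) by intro hii; exact h2 ⟨2, by omega⟩),
            mul_zero, zero_mul]
      · rw [if_neg h1, if_neg (show ¬ (i = 2*q-4) by omega), zero_mul, zero_mul]
    rw [Finset.sum_congr rfl hE3, Finset.sum_ite_eq' (range b) (2*q-4)]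
    by_cases hba : b = q - 1
    · rw [if_pos hba]
      rw [if_pos (by omega : b % 2 = 1)]
      rw [if_neg (show ¬ (q-1) ∣ (b+1) by
        intro hdvd
        rcases hm (b+1) (by omega) (by omega) hdvd with h | h <;> omega)]
      rw [if_pos (by exact ⟨1, by omega⟩ : (q-1) ∣ b)]
      rw [if_neg (by simp only [mem_range]; omega : ¬ (2*q-4 ∈ range b))]
      ring
    · rw [if_neg hba]
      by_cases hbb : b = 2*q-3
      · rw [if_pos (by omega : b % 2 = 1)]
        rw [if_pos (by exact ⟨2, by omega⟩ : (q-1) ∣ (b+1))]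
        rw [if_neg (show ¬ (q-1) ∣ b by
          intro hdvd
          rcases hm b (by omega) (by omega) hdvd with h | h <;> omega)]
        rw [if_pos (by simp only [mem_range]; omega : (2*q-4 ∈ range b))]
        have : b - (2*q-4) = 1 := by omega
        rw [this]
        linear_combination (S1 1) * h2K
      · by_cases hbc : b = 2*q-2
        · rw [if_neg (by omega : ¬ b % 2 = 1)]
          rw [if_pos (by exact ⟨2, by omega⟩ : (q-1) ∣ b)]
          rw [if_pos (by simp only [mem_range]; omega : (2*q-4 ∈ range b))]
          have : b - (2*q-4) = 2 := by omega
          rw [this]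
          linear_combination (S1 2) * h2K
        · -- generic case : everything vanishes
          have hE1 : ¬ ((q-1) ∣ (b+1)) ∨ b % 2 = 0 := by
            by_cases h1 : (q-1) ∣ (b+1)
            · rcases hm (b+1) (by omega) (by omega) h1 with h | h
              · right; omega
              · omega
            · left; exact h1
          have hE2 : ¬ ((q-1) ∣ b) := by
            intro h1
            rcases hm b (by omega) (by omega) h1 with h | h <;> omega
          rw [if_neg hE2, if_neg (by simp only [mem_range]; omega : ¬ (2*q-4 ∈ range b))]
          rcases hE1 with h | h
          · rw [if_neg h]
            ring
          · rw [if_neg (by omega : ¬ b % 2 = 1)]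
            ring
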